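/- Let A ∈ Mₙ(ℤ) and let {F_m} be a Følner sequence in ℕ. A Borel probability measure μ on 𝕋ⁿ is an ergodic T_A-invariant measure if and only if lim_{m→∞} (1/|F_m|) Σ_{j ∈ F_m} μ̂(A^j k + l) = μ̂(k) μ̂(l) for all k, l ∈ ℤ^{n×1}. -/

import Mathlib

open MeasureTheory Filter Matrix Topology
open scoped symmDiff

instance : Fact ((0:ℝ) < 1) := ⟨one_pos⟩

/-- The `n`-torus `𝕋ⁿ = ℝⁿ/ℤⁿ`, as the product of `n` copies of `ℝ/ℤ`. -/
abbrev Torus (n : ℕ) := Fin n → AddCircle (1 : ℝ)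

/-- The `×A` map `T_A` on the `n`-torus, `T_A(x + ℤⁿ) = xA + ℤⁿ` for row vectors `x`. -/
noncomputable def TA {n : ℕ} (A : Matrix (Fin n) (Fin n) ℤ) (x : Torus n) : Torus n :=
  fun j => ∑ i, A i j • x i

/-- The Fourier coefficient `μ̂(k) = ∫_{𝕋ⁿ} z^k dμ(z)` of a measure `μ` on the `n`-torus,
where `z^k = z₁^{k₁} ⋯ zₙ^{kₙ}`. -/
noncomputable def fc {n : ℕ} (μ : Measure (Torus n)) (k : Fin n → ℤ) : ℂ :=
  ∫ x, ∏ i, fourier (k i) (x i) ∂μ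

/-- A Følner sequence in `ℕ`: a sequence of nonempty finite subsets `F m ⊆ ℕ` with
`|(F m + m') ∆ F m| / |F m| → 0` for every `m' ∈ ℕ`. -/
def IsFolner (F : ℕ → Finset ℕ) : Prop :=
  (∀ m, (F m).Nonempty) ∧
  ∀ m' : ℕ, Tendsto
    (fun m => ((((F m).image (· + m')) ∆ (F m)).card : ℝ) / (F m).card) atTop (𝓝 0)

/-! ### Auxiliary material -/

open scoped ComplexConjugate

/-! #### Characters of the torus -/

lemma fourier_pt_add {T : ℝ} (m : ℤ) (a b : AddCircle T) :
    fourier m (a + b) = fourier m a * fourier m b := by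
  simp_rw [fourier_apply, smul_add, AddCircle.toCircle_add, Circle.coe_mul]

lemma fourier_pt_zero {T : ℝ} (m : ℤ) :
    fourier m (0 : AddCircle T) = 1 := by
  rw [fourier_apply, smul_zero]
  exact fourier_zero' (T := T)

lemma fourier_zsmul {T : ℝ} (m c : ℤ) (x : AddCircle T) :
    fourier m (c • x) = fourier (m * c) x := by
  rw [fourier_apply, fourier_apply, smul_smul]

lemma fourier_sum_index {T : ℝ} {ι : Type*} (s : Finset ι) (d : ι → ℤ) (y : AddCircle T) :
    fourier (∑ j ∈ s, d j) y = ∏ j ∈ s, fourier (d j) y := by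
  induction s using Finset.cons_induction with
  | empty => simp [fourier_zero]
  | cons a s ha ih => rw [Finset.sum_cons, Finset.prod_cons, fourier_add, ih]

lemma fourier_sum_pt {T : ℝ} {ι : Type*} (s : Finset ι) (m : ℤ) (y : ι → AddCircle T) :
    fourier m (∑ i ∈ s, y i) = ∏ i ∈ s, fourier m (y i) := by
  induction s using Finset.cons_induction with
  | empty => simp [fourier_pt_zero]
  | cons a s ha ih => rw [Finset.sum_cons, Finset.prod_cons, fourier_pt_add, ih]

/-- The character `z ↦ z^k` on the torus. -/
noncomputable def tchar {n : ℕ} (k : Fin n → ℤ) : C(Torus n, ℂ) where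
  toFun := fun x => ∏ i, fourier (k i) (x i)
  continuous_toFun := continuous_finset_prod _ fun i _ =>
    (map_continuous (fourier (k i))).comp (continuous_apply i)

lemma tchar_apply {n : ℕ} (k : Fin n → ℤ) (x : Torus n) :
    tchar k x = ∏ i, fourier (k i) (x i) := rfl

lemma fc_eq {n : ℕ} (μ : Measure (Torus n)) (k : Fin n → ℤ) :
    fc μ k = ∫ x, tchar k x ∂μ := rfl

lemma tchar_add {n : ℕ} (k l : Fin n → ℤ) (x : Torus n) :
    tchar (k + l) x = tchar k x * tchar l x := by
  simp_rw [tchar_apply, ← Finset.prod_mul_distrib, Pi.add_apply, fourier_add]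

lemma tchar_zero {n : ℕ} (x : Torus n) : tchar (0 : Fin n → ℤ) x = 1 := by
  simp [tchar_apply, fourier_zero]

lemma tchar_conj {n : ℕ} (k : Fin n → ℤ) (x : Torus n) :
    conj (tchar k x) = tchar (-k) x := by
  simp_rw [tchar_apply, map_prod, Pi.neg_apply, fourier_neg]

lemma norm_tchar {n : ℕ} (k : Fin n → ℤ) (x : Torus n) : ‖tchar k x‖ = 1 := by
  rw [tchar_apply, norm_prod]
  apply Finset.prod_eq_one
  intro i _
  rw [fourier_apply, Circle.norm_coe]

lemma tchar_comp_TA {n : ℕ} (A : Matrix (Fin n) (Fin n) ℤ) (k : Fin n → ℤ) (x : Torus n) :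
    tchar k (TA A x) = tchar (A.mulVec k) x := by
  simp_rw [tchar_apply, TA, fourier_sum_pt, fourier_zsmul]
  rw [Finset.prod_comm]
  refine Finset.prod_congr rfl fun i _ => ?_
  rw [← fourier_sum_index]
  congr 1
  simp [Matrix.mulVec, dotProduct, mul_comm]

/-! #### Følner helper lemmas -/

section FolnerHelpers

variable {E : Type*} [NormedAddCommGroup E] [NormedSpace ℂ E]

omit [NormedSpace ℂ E] in
lemma norm_sum_sub_sum_le (s t : Finset ℕ) (a : ℕ → E) (C : ℝ) (ha : ∀ j, ‖a j‖ ≤ C) :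
    ‖(∑ j ∈ s, a j) - ∑ j ∈ t, a j‖ ≤ (s ∆ t).card * C := by
  have h1 : (∑ j ∈ s, a j) - ∑ j ∈ t, a j = (∑ j ∈ s \ t, a j) - ∑ j ∈ t \ s, a j := by
    rw [← Finset.sum_inter_add_sum_sdiff s t a, ← Finset.sum_inter_add_sum_sdiff t s a,
      Finset.inter_comm t s]
    abel
  have hb : ∀ u : Finset ℕ, ‖∑ j ∈ u, a j‖ ≤ u.card * C := by
    intro u
    refine (norm_sum_le _ _).trans ?_
    rw [← nsmul_eq_mul]
    exact Finset.sum_le_card_nsmul _ _ _ fun j _ => ha j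
  rw [h1, symmDiff_def, Finset.sup_eq_union,
    Finset.card_union_of_disjoint disjoint_sdiff_sdiff]
  calc ‖(∑ j ∈ s \ t, a j) - ∑ j ∈ t \ s, a j‖
      ≤ ‖∑ j ∈ s \ t, a j‖ + ‖∑ j ∈ t \ s, a j‖ := norm_sub_le _ _
    _ ≤ (s \ t).card * C + (t \ s).card * C := add_le_add (hb _) (hb _)
    _ = ((s \ t).card + (t \ s).card) * C := by ring
    _ = (((s \ t).card + (t \ s).card : ℕ) : ℝ) * C := by push_cast; ring

lemma avg_norm_le (s : Finset ℕ) (hs : s.Nonempty) (a : ℕ → E) (C : ℝ)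
    (ha : ∀ j, ‖a j‖ ≤ C) :
    ‖(s.card : ℂ)⁻¹ • ∑ j ∈ s, a j‖ ≤ C := by
  have hcard : (0:ℝ) < s.card := by exact_mod_cast Finset.card_pos.2 hs
  rw [norm_smul, norm_inv, Complex.norm_natCast]
  have : ‖∑ j ∈ s, a j‖ ≤ s.card * C := by
    refine (norm_sum_le _ _).trans ?_
    rw [← nsmul_eq_mul]
    exact Finset.sum_le_card_nsmul _ _ _ fun j _ => ha j
  calc (s.card:ℝ)⁻¹ * ‖∑ j ∈ s, a j‖ ≤ (s.card:ℝ)⁻¹ * (s.card * C) := by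
        apply mul_le_mul_of_nonneg_left this (by positivity)
    _ = C := by field_simp

/-- The key Følner estimate: the difference between the average over the shifted set and
the average over the original set tends to zero. -/
lemma folner_shift_diff_tendsto_zero {F : ℕ → Finset ℕ} (hF : IsFolner F)
    (a : ℕ → E) (C : ℝ) (ha : ∀ j, ‖a j‖ ≤ C) :
    Tendsto (fun m => ((F m).card : ℂ)⁻¹ •
      ((∑ j ∈ (F m).image (· + 1), a j) - ∑ j ∈ F m, a j)) atTop (𝓝 0) := by
  have h0 : Tendsto (fun m => ((((F m).image (· + 1)) ∆ (F m)).card : ℝ) / (F m).card * C)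
      atTop (𝓝 0) := by
    simpa using (hF.2 1).mul_const C
  refine squeeze_zero_norm (fun m => ?_) h0
  have hcard : (0:ℝ) < (F m).card := by exact_mod_cast Finset.card_pos.2 (hF.1 m)
  rw [norm_smul, norm_inv, Complex.norm_natCast]
  calc ((F m).card:ℝ)⁻¹ * ‖(∑ j ∈ (F m).image (· + 1), a j) - ∑ j ∈ F m, a j‖
      ≤ ((F m).card:ℝ)⁻¹ * (((((F m).image (· + 1)) ∆ (F m)).card : ℝ) * C) := by
        apply mul_le_mul_of_nonneg_left (norm_sum_sub_sum_le _ _ a C ha) (by positivity)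
    _ = ((((F m).image (· + 1)) ∆ (F m)).card : ℝ) / (F m).card * C := by
        field_simp

end FolnerHelpers

/-! #### An abstract mean ergodic theorem along Følner sequences -/

section MeanErgodic

variable {H : Type*} [NormedAddCommGroup H] [InnerProductSpace ℂ H] [CompleteSpace H]

local notation "⟪" x ", " y "⟫" => @inner ℂ _ _ x y

omit [CompleteSpace H] in
lemma pow_isometry {T : H →L[ℂ] H} (hT : ∀ x, ‖T x‖ = ‖x‖) (j : ℕ) (x : H) :
    ‖(T ^ j) x‖ = ‖x‖ := by
  induction j generalizing x with
  | zero => simp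
  | succ j ih =>
    rw [pow_succ, ContinuousLinearMap.mul_apply, ih (T x), hT x]

lemma adjoint_fixed_iff {T : H →L[ℂ] H} (hT : ∀ x, ‖T x‖ = ‖x‖) {x : H} :
    ContinuousLinearMap.adjoint T x = x ↔ T x = x := by
  have hid : ContinuousLinearMap.adjoint T ∘L T = 1 :=
    (T.norm_map_iff_adjoint_comp_self).1 hT
  constructor
  · intro hx
    have h1 : ⟪x, T x⟫ = (‖x‖ : ℂ) ^ 2 := by
      rw [← T.adjoint_inner_left x x, hx, inner_self_eq_norm_sq_to_K]
      norm_cast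
    have h2 : ‖T x - x‖ ^ 2 = 0 := by
      rw [@norm_sub_sq ℂ]
      have hre : RCLike.re (⟪T x, x⟫ : ℂ) = ‖x‖ ^ 2 := by
        rw [← inner_conj_symm, h1]
        simp [RCLike.re_to_complex, Complex.conj_ofReal, ← Complex.ofReal_pow]
      rw [hre, hT x]
      ring
    have := pow_eq_zero_iff (n := 2) (by norm_num) |>.1 h2
    rw [norm_eq_zero, sub_eq_zero] at this
    exact this
  · intro hx
    conv_lhs => rw [← hx]
    rw [← ContinuousLinearMap.comp_apply, hid, ContinuousLinearMap.one_apply]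

/-- Abstract mean ergodic theorem: for an isometry `T` of a complex Hilbert space and a
Følner sequence `F` in `ℕ`, the averages of `T ^ j x` over `F m` converge to a `T`-fixed
vector `g` with the same inner products against all fixed vectors. -/
theorem mean_ergodic_folner {T : H →L[ℂ] H} (hT : ∀ x, ‖T x‖ = ‖x‖)
    {F : ℕ → Finset ℕ} (hF : IsFolner F) (f : H) :
    ∃ g : H, T g = g ∧ (∀ y, T y = y → ⟪y, f⟫ = ⟪y, g⟫) ∧
      Tendsto (fun m => ((F m).card : ℂ)⁻¹ • ∑ j ∈ F m, (T ^ j) f) atTop (𝓝 g) := by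
  classical
  set S : Submodule ℂ H := LinearMap.range ((T - 1 : H →L[ℂ] H) : H →ₗ[ℂ] H) with hS
  have hmem : ∀ x : H, x ∈ Sᗮ ↔ T x = x := by
    intro x
    rw [Submodule.mem_orthogonal]
    constructor
    · intro h
      rw [← adjoint_fixed_iff hT]
      refine ext_inner_left ℂ fun v => ?_
      rw [T.adjoint_inner_right]
      have h2 := h ((T - 1) v) (LinearMap.mem_range_self _ v)
      rw [ContinuousLinearMap.sub_apply, ContinuousLinearMap.one_apply, inner_sub_left,
        sub_eq_zero] at h2
      exact h2
    · intro hx u hu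
      obtain ⟨v, rfl⟩ := hu
      rw [ContinuousLinearMap.coe_coe, ContinuousLinearMap.sub_apply, ContinuousLinearMap.one_apply, inner_sub_left,
        sub_eq_zero, ← T.adjoint_inner_right, (adjoint_fixed_iff hT).2 hx]
  haveI : CompleteSpace (Sᗮ : Submodule ℂ H) := (Submodule.isClosed_orthogonal S).completeSpace_coe
  haveI : Submodule.HasOrthogonalProjection (Sᗮ) := Submodule.HasOrthogonalProjection.ofCompleteSpace Sᗮ
  obtain ⟨g, hgK, z, hz, hfgz⟩ := (Sᗮ).exists_add_mem_mem_orthogonal f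
  have hTg : T g = g := (hmem g).1 hgK
  have hzc : z ∈ S.topologicalClosure := by
    rw [← Submodule.orthogonal_orthogonal_eq_closure]; exact hz
  have hTjg : ∀ j, (T ^ j) g = g := by
    intro j
    induction j with
    | zero => simp
    | succ j ih => rw [pow_succ, ContinuousLinearMap.mul_apply, hTg, ih]
  have havgf : ∀ m, ((F m).card : ℂ)⁻¹ • ∑ j ∈ F m, (T ^ j) f
      = g + ((F m).card : ℂ)⁻¹ • ∑ j ∈ F m, (T ^ j) z := by
    intro m
    have hcard : ((F m).card : ℂ) ≠ 0 := by
      exact_mod_cast Finset.card_ne_zero_of_mem (hF.1 m).choose_spec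
    have : ∀ j, (T ^ j) f = g + (T ^ j) z := by
      intro j
      rw [hfgz, map_add, hTjg]
    simp_rw [this, Finset.sum_add_distrib, Finset.sum_const, smul_add]
    congr 1
    rw [← Nat.cast_smul_eq_nsmul ℂ, smul_smul, inv_mul_cancel₀ hcard, one_smul]
  have hz0 : Tendsto (fun m => ((F m).card : ℂ)⁻¹ • ∑ j ∈ F m, (T ^ j) z) atTop (𝓝 0) := by
    rw [NormedAddCommGroup.tendsto_nhds_zero]
    intro ε hε
    have hzcl : z ∈ closure (S : Set H) := hzc
    obtain ⟨w', hw'S, hw'⟩ := Metric.mem_closure_iff.1 hzcl (ε/2) (half_pos hε)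
    obtain ⟨w, rfl⟩ := hw'S
    have hdist : ‖z - (T - 1) w‖ < ε/2 := by
      rw [← dist_eq_norm]; exact hw'
    have hrepr : ∀ m, ((F m).card : ℂ)⁻¹ • ∑ j ∈ F m, (T ^ j) ((T - 1) w)
        = ((F m).card : ℂ)⁻¹ •
          ((∑ j ∈ (F m).image (· + 1), (T ^ j) w) - ∑ j ∈ F m, (T ^ j) w) := by
      intro m
      congr 1
      rw [Finset.sum_image (fun a _ b _ h => by omega)]
      rw [← Finset.sum_sub_distrib]
      refine Finset.sum_congr rfl fun j _ => ?_
      rw [ContinuousLinearMap.sub_apply, ContinuousLinearMap.one_apply, map_sub,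
        pow_succ, ContinuousLinearMap.mul_apply]
    have hto : Tendsto (fun m => ((F m).card : ℂ)⁻¹ •
        ((∑ j ∈ (F m).image (· + 1), (T ^ j) w) - ∑ j ∈ F m, (T ^ j) w)) atTop (𝓝 0) :=
      folner_shift_diff_tendsto_zero hF _ ‖w‖ (fun j => le_of_eq (pow_isometry hT j w))
    rw [NormedAddCommGroup.tendsto_nhds_zero] at hto
    filter_upwards [hto (ε/2) (half_pos hε)] with m hm
    have hsplit : ((F m).card : ℂ)⁻¹ • ∑ j ∈ F m, (T ^ j) z
        = ((F m).card : ℂ)⁻¹ • ∑ j ∈ F m, (T ^ j) (z - (T - 1) w)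
          + ((F m).card : ℂ)⁻¹ • ∑ j ∈ F m, (T ^ j) ((T - 1) w) := by
      rw [← smul_add, ← Finset.sum_add_distrib]
      congr 1
      refine Finset.sum_congr rfl fun j _ => ?_
      rw [← map_add]
      congr 1
      abel
    rw [hsplit]
    calc ‖_ + _‖ ≤ ‖((F m).card : ℂ)⁻¹ • ∑ j ∈ F m, (T ^ j) (z - (T - 1) w)‖
          + ‖((F m).card : ℂ)⁻¹ • ∑ j ∈ F m, (T ^ j) ((T - 1) w)‖ := norm_add_le _ _
      _ < ε/2 + ε/2 := by
          apply add_lt_add_of_le_of_lt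
          · exact (avg_norm_le _ (hF.1 m) _ _
              (fun j => le_of_eq (pow_isometry hT j _))).trans hdist.le
          · rw [hrepr m]; exact hm
      _ = ε := by ring
  refine ⟨g, hTg, ?_, ?_⟩
  · intro y hy
    have hyz : ⟪y, z⟫ = (0:ℂ) := (Submodule.mem_orthogonal _ _).1 hz y ((hmem y).2 hy)
    rw [hfgz, inner_add_right, hyz, add_zero]
  · have := hz0.const_add g
    simp only [add_zero] at this
    exact this.congr fun m => (havgf m).symm

end MeanErgodic

/-! #### Density of characters and measure extensionality -/

section Density

open Set

variable {n : ℕ}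

/-- The star subalgebra of `C(Torus n, ℂ)` generated by the characters. -/
noncomputable def tcharSubalgebra (n : ℕ) : StarSubalgebra ℂ C(Torus n, ℂ) where
  toSubalgebra := Algebra.adjoin ℂ (Set.range (tchar (n := n)))
  star_mem' := by
    show Algebra.adjoin ℂ (Set.range (tchar (n := n))) ≤
      star (Algebra.adjoin ℂ (Set.range (tchar (n := n))))
    refine Algebra.adjoin_le ?_
    rintro - ⟨k, rfl⟩
    exact Algebra.subset_adjoin ⟨-k, ContinuousMap.ext fun z => (tchar_conj k z).symm⟩

theorem tcharSubalgebra_coe :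
    Subalgebra.toSubmodule (tcharSubalgebra n).toSubalgebra
      = Submodule.span ℂ (Set.range (tchar (n := n))) := by
  apply Algebra.adjoin_eq_span_of_subset
  refine Subset.trans ?_ Submodule.subset_span
  intro x hx
  refine Submonoid.closure_induction (fun _ => id) ⟨0, ?_⟩ ?_ hx
  · ext1 z; exact tchar_zero z
  · rintro - - - - ⟨k, rfl⟩ ⟨l, rfl⟩
    refine ⟨k + l, ?_⟩
    ext1 z
    exact tchar_add k l z

theorem tcharSubalgebra_separatesPoints : (tcharSubalgebra n).SeparatesPoints := by
  intro x y hxy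
  obtain ⟨i, hi⟩ := Function.ne_iff.1 hxy
  refine ⟨_, ⟨tchar (Pi.single i 1), Algebra.subset_adjoin ⟨_, rfl⟩, rfl⟩, ?_⟩
  have key : ∀ z : Torus n, tchar (Pi.single i 1) z = fourier 1 (z i) := by
    intro z
    rw [tchar_apply,
      Finset.prod_eq_single i
        (fun j _ hj => by rw [Pi.single_eq_of_ne hj]; exact fourier_zero)
        (by simp)]
    rw [Pi.single_eq_same]
  dsimp only
  rw [key, key]
  simp_rw [fourier_one]
  contrapose! hi
  rw [Circle.coe_inj] at hi
  exact AddCircle.injective_toCircle one_ne_zero hi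

theorem tcharSubalgebra_closure_eq_top : (tcharSubalgebra n).topologicalClosure = ⊤ :=
  ContinuousMap.starSubalgebra_topologicalClosure_eq_top_of_separatesPoints _
    tcharSubalgebra_separatesPoints

theorem span_tchar_closure_eq_top :
    (Submodule.span ℂ (Set.range (tchar (n := n)))).topologicalClosure = ⊤ := by
  rw [← tcharSubalgebra_coe]
  exact congr_arg (Subalgebra.toSubmodule <| StarSubalgebra.toSubalgebra ·)
    tcharSubalgebra_closure_eq_top

lemma tchar_integrable (m : Measure (Torus n)) [IsFiniteMeasure m] (f : C(Torus n, ℂ)) :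
    Integrable f m :=
  f.continuous.integrable_of_hasCompactSupport (HasCompactSupport.of_compactSpace _)

lemma continuous_integral_cm (m : Measure (Torus n)) [IsFiniteMeasure m] :
    Continuous fun f : C(Torus n, ℂ) => ∫ x, f x ∂m := by
  refine (LipschitzWith.of_dist_le_mul (K := (m univ).toNNReal) fun f g => ?_).continuous
  rw [dist_eq_norm, dist_eq_norm, ← integral_sub (tchar_integrable m f) (tchar_integrable m g)]
  calc ‖∫ x, (f x - g x) ∂m‖ ≤ ∫ x, ‖f x - g x‖ ∂m := norm_integral_le_integral_norm _
    _ ≤ ∫ _, ‖f - g‖ ∂m := by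
        refine integral_mono (tchar_integrable m (f - g)).norm (integrable_const _) fun x => ?_
        exact (ContinuousMap.norm_coe_le_norm (f - g) x)
    _ = (m univ).toReal * ‖f - g‖ := by rw [integral_const, smul_eq_mul]; rfl
    _ = (m univ).toNNReal * ‖f - g‖ := rfl

/-- Two finite measures on the torus with the same Fourier coefficients are equal. -/
theorem measure_ext_tchar (μ ν : Measure (Torus n)) [IsFiniteMeasure μ] [IsFiniteMeasure ν]
    (h : ∀ k : Fin n → ℤ, (∫ x, tchar k x ∂μ) = ∫ x, tchar k x ∂ν) : μ = ν := by
  -- first, equality of integrals of all continuous complex functions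
  have key : ∀ f : C(Torus n, ℂ), (∫ x, f x ∂μ) = ∫ x, f x ∂ν := by
    have hclosed : IsClosed {f : C(Torus n, ℂ) | (∫ x, f x ∂μ) = ∫ x, f x ∂ν} :=
      isClosed_eq (continuous_integral_cm μ) (continuous_integral_cm ν)
    have hspan : ∀ f ∈ Submodule.span ℂ (Set.range (tchar (n := n))),
        (∫ x, f x ∂μ) = ∫ x, f x ∂ν := by
      intro f hf
      induction hf using Submodule.span_induction with
      | mem f hf => obtain ⟨k, rfl⟩ := hf; exact h k
      | zero => simp
      | add f g _ _ hf hg =>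
          simp only [ContinuousMap.coe_add, Pi.add_apply]
          rw [integral_add (tchar_integrable μ _) (tchar_integrable μ _),
            integral_add (tchar_integrable ν _) (tchar_integrable ν _), hf, hg]
      | smul c f _ hf =>
          simp only [ContinuousMap.coe_smul, Pi.smul_apply]
          rw [integral_smul, integral_smul, hf]
    intro f
    have hdense : Dense (Submodule.span ℂ (Set.range (tchar (n := n))) : Set C(Torus n, ℂ)) :=
      Submodule.dense_iff_topologicalClosure_eq_top.2 span_tchar_closure_eq_top
    have hsub : closure ((Submodule.span ℂ (Set.range (tchar (n := n)))) : Set C(Torus n, ℂ))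
        ⊆ {f : C(Torus n, ℂ) | (∫ x, f x ∂μ) = ∫ x, f x ∂ν} :=
      hclosed.closure_subset_iff.2 fun g hg => hspan g hg
    exact hsub (hdense f)
  -- now conclude equality of the measures
  refine ext_of_forall_lintegral_eq_of_IsFiniteMeasure ?_
  intro f
  have hc : Continuous fun x : Torus n => ((f x : ℝ) : ℂ) :=
    Complex.continuous_ofReal.comp (NNReal.continuous_coe.comp f.continuous)
  have h2 := key ⟨_, hc⟩
  simp only [ContinuousMap.coe_mk] at h2
  have hcr : Continuous fun x : Torus n => (f x : ℝ) :=
    NNReal.continuous_coe.comp f.continuous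
  have h3 : (∫ x, ((f x : ℝ)) ∂μ) = ∫ x, ((f x : ℝ)) ∂ν := by
    have hμ : (∫ x, ((f x : ℝ) : ℂ) ∂μ) = ((∫ x, (f x : ℝ) ∂μ : ℝ) : ℂ) :=
      integral_ofReal
    have hν : (∫ x, ((f x : ℝ) : ℂ) ∂ν) = ((∫ x, (f x : ℝ) ∂ν : ℝ) : ℂ) :=
      integral_ofReal
    rw [hμ, hν] at h2
    exact_mod_cast h2
  have hiμ : Integrable (fun x : Torus n => (f x : ℝ)) μ :=
    (ContinuousMap.mk _ hcr).continuous.integrable_of_hasCompactSupport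
      (HasCompactSupport.of_compactSpace _)
  have hiν : Integrable (fun x : Torus n => (f x : ℝ)) ν :=
    (ContinuousMap.mk _ hcr).continuous.integrable_of_hasCompactSupport
      (HasCompactSupport.of_compactSpace _)
  rw [lintegral_coe_eq_integral _ hiμ, lintegral_coe_eq_integral _ hiν, h3]

end Density

/-! #### The Koopman operator on `L²(μ)` -/

section Koopman

variable {n : ℕ}

local notation "⟪" x ", " y "⟫" => @inner ℂ _ _ x y

lemma continuous_TA (A : Matrix (Fin n) (Fin n) ℤ) : Continuous (TA A) :=
  continuous_pi fun j => continuous_finset_sum _ fun i _ =>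
    (continuous_zsmul (A i j)).comp (continuous_apply i)

lemma measurable_TA (A : Matrix (Fin n) (Fin n) ℤ) : Measurable (TA A) :=
  (continuous_TA A).measurable

variable (μ : Measure (Torus n)) [IsProbabilityMeasure μ]

/-- The characters as elements of `L²(μ)`. -/
noncomputable def cLp (k : Fin n → ℤ) : Lp ℂ 2 μ :=
  ContinuousMap.toLp (E := ℂ) 2 μ ℂ (tchar k)

lemma coeFn_cLp (k : Fin n → ℤ) : cLp μ k =ᵐ[μ] tchar k :=
  ContinuousMap.coeFn_toLp μ (tchar k)

lemma inner_cLp (l p : Fin n → ℤ) : ⟪cLp μ (-l), cLp μ p⟫ = fc μ (p + l) := by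
  rw [MeasureTheory.L2.inner_def, fc_eq]
  refine integral_congr_ae ?_
  filter_upwards [coeFn_cLp μ (-l), coeFn_cLp μ p] with x h1 h2
  rw [h1, h2, RCLike.inner_apply, tchar_conj, neg_neg, ← tchar_add, add_comm]

lemma fc_zero : fc μ 0 = 1 := by
  rw [fc_eq]
  simp_rw [tchar_zero]
  simp

lemma fc_conj (k : Fin n → ℤ) : (starRingEnd ℂ) (fc μ k) = fc μ (-k) := by
  rw [fc_eq, fc_eq, ← integral_conj]
  exact integral_congr_ae (Filter.Eventually.of_forall fun x => tchar_conj k x)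

lemma norm_fc_le_one (k : Fin n → ℤ) : ‖fc μ k‖ ≤ 1 := by
  rw [fc_eq]
  calc ‖∫ x, tchar k x ∂μ‖ ≤ ∫ x, ‖tchar k x‖ ∂μ := norm_integral_le_integral_norm _
    _ = 1 := by simp_rw [norm_tchar]; simp

variable {A : Matrix (Fin n) (Fin n) ℤ}

/-- The Koopman operator of `TA A` on `L²(μ)`. -/
noncomputable def koopman (hmp : MeasurePreserving (TA A) μ μ) :
    Lp ℂ 2 μ →L[ℂ] Lp ℂ 2 μ :=
  LinearMap.mkContinuous
    { toFun := fun g => Lp.compMeasurePreserving (TA A) hmp g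
      map_add' := fun g h => map_add _ g h
      map_smul' := by
        intro c g
        simp only [RingHom.id_apply]
        refine Lp.ext ?_
        have h1 := Lp.coeFn_compMeasurePreserving (c • g) hmp
        have h2 := Lp.coeFn_compMeasurePreserving g hmp
        have h3 : ⇑(c • g) =ᵐ[μ] c • ⇑g := Lp.coeFn_smul c g
        have h4 := hmp.quasiMeasurePreserving.ae_eq h3
        have h5 : ⇑(c • Lp.compMeasurePreserving (TA A) hmp g) =ᵐ[μ]
            c • ⇑(Lp.compMeasurePreserving (TA A) hmp g) := Lp.coeFn_smul _ _
        refine (h1.trans (h4.trans ?_)).trans h5.symm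
        have heq : (c • ⇑g) ∘ TA A = c • (⇑g ∘ TA A) := rfl
        rw [heq]
        exact h2.symm.const_smul c }
    1 (fun g => by
        rw [one_mul]
        exact le_of_eq (Lp.norm_compMeasurePreserving g hmp))

lemma koopman_norm (hmp : MeasurePreserving (TA A) μ μ) :
    ∀ g, ‖koopman μ hmp g‖ = ‖g‖ :=
  fun g => Lp.norm_compMeasurePreserving g hmp

lemma koopman_cLp (hmp : MeasurePreserving (TA A) μ μ) (k : Fin n → ℤ) :
    koopman μ hmp (cLp μ k) = cLp μ (A.mulVec k) := by
  refine Lp.ext ?_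
  have h1 := Lp.coeFn_compMeasurePreserving (cLp μ k) hmp
  have h2 := hmp.quasiMeasurePreserving.ae_eq (coeFn_cLp μ k)
  have h3 : (⇑(tchar k)) ∘ TA A = ⇑(tchar (A.mulVec k)) :=
    funext fun x => tchar_comp_TA A k x
  calc ⇑(koopman μ hmp (cLp μ k)) =ᵐ[μ] ⇑(cLp μ k) ∘ TA A := h1
    _ =ᵐ[μ] (⇑(tchar k)) ∘ TA A := h2
    _ = ⇑(tchar (A.mulVec k)) := h3
    _ =ᵐ[μ] ⇑(cLp μ (A.mulVec k)) := (coeFn_cLp μ _).symm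

lemma koopman_pow_cLp (hmp : MeasurePreserving (TA A) μ μ) (j : ℕ) (k : Fin n → ℤ) :
    ((koopman μ hmp) ^ j) (cLp μ k) = cLp μ ((A ^ j).mulVec k) := by
  induction j with
  | zero => simp [Matrix.one_mulVec]
  | succ j ih =>
    rw [pow_succ', ContinuousLinearMap.mul_apply, ih, koopman_cLp, Matrix.mulVec_mulVec,
      ← pow_succ']

lemma avg_inner_eq (hmp : MeasurePreserving (TA A) μ μ) (k l : Fin n → ℤ)
    (F : ℕ → Finset ℕ) (m : ℕ) :
    (1 / ((F m).card : ℂ)) * ∑ j ∈ F m, fc μ ((A ^ j).mulVec k + l)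
      = ⟪cLp μ (-l), ((F m).card : ℂ)⁻¹ • ∑ j ∈ F m, ((koopman μ hmp) ^ j) (cLp μ k)⟫ := by
  rw [inner_smul_right, inner_sum, one_div]
  congr 1
  refine Finset.sum_congr rfl fun j _ => ?_
  rw [koopman_pow_cLp, inner_cLp]

lemma span_cLp_dense :
    (Submodule.span ℂ (Set.range (cLp μ))).topologicalClosure = ⊤ := by
  convert (ContinuousMap.toLp_denseRange ℂ μ ℂ
      (by simp : (2:ENNReal) ≠ ⊤)).topologicalClosure_map_submodule span_tchar_closure_eq_top
  · rfl
  erw [Submodule.map_span, Set.range_comp]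
  simp only [ContinuousLinearMap.coe_coe]

lemma eq_zero_of_inner_cLp_zero {d : Lp ℂ 2 μ} (hd : ∀ p, ⟪cLp μ p, d⟫ = 0) : d = 0 := by
  have hc : Continuous fun v : Lp ℂ 2 μ => (⟪v, d⟫ : ℂ) := by
    have heq : (fun v : Lp ℂ 2 μ => (⟪v, d⟫ : ℂ)) = fun v => starRingEnd ℂ ⟪d, v⟫ := by
      funext v; rw [inner_conj_symm]
    rw [heq]
    exact continuous_star.comp (innerSL ℂ d).continuous
  have hclosed : IsClosed {v : Lp ℂ 2 μ | (⟪v, d⟫ : ℂ) = 0} := isClosed_eq hc continuous_const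
  have hsub : ∀ v ∈ Submodule.span ℂ (Set.range (cLp μ)), (⟪v, d⟫ : ℂ) = 0 := by
    intro v hv
    induction hv using Submodule.span_induction with
    | mem v hv => obtain ⟨p, rfl⟩ := hv; exact hd p
    | zero => simp
    | add a b _ _ ha hb => rw [inner_add_left, ha, hb, add_zero]
    | smul c a _ ha => rw [inner_smul_left, ha, mul_zero]
  have hdense : Dense (Submodule.span ℂ (Set.range (cLp μ)) : Set (Lp ℂ 2 μ)) :=
    Submodule.dense_iff_topologicalClosure_eq_top.2 (span_cLp_dense μ)
  have hall : ∀ v : Lp ℂ 2 μ, (⟪v, d⟫ : ℂ) = 0 := fun v =>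
    (hclosed.closure_subset_iff.2 fun u hu => hsub u hu) (hdense v)
  exact inner_self_eq_zero.1 (hall d)

end Koopman

/-! #### The main theorem -/

local notation "⟪" x ", " y "⟫" => @inner ℂ _ _ x y

theorem ergodic_iff_fourierCoeff
    {n : ℕ} (A : Matrix (Fin n) (Fin n) ℤ)
    (F : ℕ → Finset ℕ) (hF : IsFolner F)
    (μ : Measure (Torus n)) [IsProbabilityMeasure μ] :
    Ergodic (TA A) μ ↔
      ∀ k l : Fin n → ℤ,
        Tendsto
          (fun m => (1 / ((F m).card : ℂ)) * ∑ j ∈ F m, fc μ ((A ^ j).mulVec k + l))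
          atTop (𝓝 (fc μ k * fc μ l)) := by
  constructor
  · -- ergodic ⟹ convergence of averaged Fourier coefficients
    intro herg k l
    have hmp : MeasurePreserving (TA A) μ μ := herg.toMeasurePreserving
    obtain ⟨g, hTg, hinner, htend⟩ := mean_ergodic_folner (koopman_norm μ hmp) hF (cLp μ k)
    -- the limit g is a.e. constant, with constant fc μ k
    have hfix : ⇑g ∘ TA A =ᵐ[μ] ⇑g := by
      have h2 : ⇑(koopman μ hmp g) =ᵐ[μ] ⇑g ∘ TA A := Lp.coeFn_compMeasurePreserving g hmp
      rw [hTg] at h2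
      exact h2.symm
    obtain ⟨c, hc⟩ := herg.ae_eq_const_of_ae_eq_comp_ae (Lp.aestronglyMeasurable g) hfix
    have hgc : g = c • cLp μ 0 := by
      refine Lp.ext (hc.trans ?_)
      have h5 : ⇑(c • cLp μ 0) =ᵐ[μ] c • ⇑(cLp μ (0 : Fin n → ℤ)) := Lp.coeFn_smul _ _
      refine EventuallyEq.symm (h5.trans ?_)
      filter_upwards [coeFn_cLp μ (0 : Fin n → ℤ)] with x hx
      rw [Pi.smul_apply, hx, tchar_zero, smul_eq_mul, mul_one]
      rfl
    have h0fix : koopman μ hmp (cLp μ 0) = cLp μ 0 := by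
      rw [koopman_cLp, Matrix.mulVec_zero]
    have hnorm1 : ⟪cLp μ (0 : Fin n → ℤ), cLp μ (0 : Fin n → ℤ)⟫ = (1:ℂ) := by
      have h := inner_cLp μ 0 0
      simpa [fc_zero] using h
    have hck : c = fc μ k := by
      have h1 := hinner (cLp μ 0) h0fix
      rw [hgc, inner_smul_right, hnorm1, mul_one] at h1
      have h2 : ⟪cLp μ (0 : Fin n → ℤ), cLp μ k⟫ = fc μ k := by
        have h := inner_cLp μ 0 k
        simpa using h
      rw [h2] at h1
      exact h1.symm
    have hval : ⟪cLp μ (-l), g⟫ = fc μ k * fc μ l := by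
      have h00 : ⟪cLp μ (-l), cLp μ (0 : Fin n → ℤ)⟫ = fc μ l := by
        have h := inner_cLp μ l 0
        simpa using h
      rw [hgc, inner_smul_right, h00, hck]
    have hconv : Tendsto (fun m => ⟪cLp μ (-l),
        ((F m).card:ℂ)⁻¹ • ∑ j ∈ F m, ((koopman μ hmp)^j) (cLp μ k)⟫)
        atTop (𝓝 (fc μ k * fc μ l)) := by
      rw [← hval]
      exact tendsto_const_nhds.inner htend
    exact hconv.congr fun m => (avg_inner_eq μ hmp k l F m).symm
  · -- convergence of averaged Fourier coefficients ⟹ ergodic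
    intro h
    -- Step 1: invariance of μ
    have hfcA : ∀ k, fc μ (A.mulVec k) = fc μ k := by
      intro k
      have h1 := h k 0
      have h2 := h (A.mulVec k) 0
      rw [fc_zero, mul_one] at h1 h2
      have hs : Tendsto (fun m => ((F m).card:ℂ)⁻¹ •
          ∑ j ∈ F m, fc μ ((A ^ j).mulVec k + 0)) atTop (𝓝 (fc μ k)) := by
        refine h1.congr fun m => ?_
        rw [one_div, smul_eq_mul]
      have hshift := folner_shift_diff_tendsto_zero (E := ℂ) hF
        (fun j => fc μ ((A ^ j).mulVec k + 0)) 1 (fun j => norm_fc_le_one μ _)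
      have ht : Tendsto (fun m => ((F m).card:ℂ)⁻¹ •
          ∑ j ∈ (F m).image (· + 1), fc μ ((A ^ j).mulVec k + 0)) atTop (𝓝 (fc μ k)) := by
        have hsum := hshift.add hs
        rw [zero_add] at hsum
        refine hsum.congr fun m => ?_
        rw [smul_sub]
        abel
      have ht2 : Tendsto (fun m => ((F m).card:ℂ)⁻¹ •
          ∑ j ∈ F m, fc μ ((A ^ j).mulVec (A.mulVec k) + 0)) atTop (𝓝 (fc μ k)) := by
        refine ht.congr fun m => ?_
        congr 1
        rw [Finset.sum_image (fun a _ b _ hab => by omega)]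
        refine Finset.sum_congr rfl fun j _ => ?_
        rw [Matrix.mulVec_mulVec, ← pow_succ]
      have h2' : Tendsto (fun m => ((F m).card:ℂ)⁻¹ •
          ∑ j ∈ F m, fc μ ((A ^ j).mulVec (A.mulVec k) + 0)) atTop (𝓝 (fc μ (A.mulVec k))) := by
        refine h2.congr fun m => ?_
        rw [one_div, smul_eq_mul]
      exact tendsto_nhds_unique h2' ht2
    have hmeas := measurable_TA A
    have hmap : Measure.map (TA A) μ = μ := by
      haveI : IsProbabilityMeasure (Measure.map (TA A) μ) :=
        Measure.isProbabilityMeasure_map hmeas.aemeasurable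
      refine measure_ext_tchar _ _ ?_
      intro k
      rw [integral_map hmeas.aemeasurable (tchar k).continuous.aestronglyMeasurable]
      calc ∫ x, tchar k (TA A x) ∂μ = ∫ x, tchar (A.mulVec k) x ∂μ := by
            simp_rw [tchar_comp_TA]
        _ = ∫ x, tchar k x ∂μ := hfcA k
    have hmp : MeasurePreserving (TA A) μ μ := ⟨hmeas, hmap⟩
    -- Step 2: ergodicity
    refine ⟨hmp, ?_⟩
    constructor
    intro s hs hsinv
    set u : Lp ℂ 2 μ := indicatorConstLp 2 hs (measure_ne_top μ s) (1:ℂ) with hu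
    have hcoeu : ⇑u =ᵐ[μ] Set.indicator s fun _ => (1:ℂ) := indicatorConstLp_coeFn
    have hufix : koopman μ hmp u = u := by
      refine Lp.ext ?_
      have h1 := Lp.coeFn_compMeasurePreserving u hmp
      have h2 := hmp.quasiMeasurePreserving.ae_eq hcoeu
      have h3 : (Set.indicator s fun _ => (1:ℂ)) ∘ TA A
          = Set.indicator s fun _ => (1:ℂ) := by
        funext x
        have hxs : TA A x ∈ s ↔ x ∈ s := by rw [← Set.mem_preimage, hsinv]
        simp only [Function.comp_apply]
        by_cases hx : x ∈ s
        · rw [Set.indicator_of_mem (hxs.2 hx), Set.indicator_of_mem hx]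
        · rw [Set.indicator_of_notMem (fun hc => hx (hxs.1 hc)), Set.indicator_of_notMem hx]
      calc ⇑(koopman μ hmp u) =ᵐ[μ] ⇑u ∘ TA A := h1
        _ =ᵐ[μ] (Set.indicator s fun _ => (1:ℂ)) ∘ TA A := h2
        _ = Set.indicator s fun _ => (1:ℂ) := h3
        _ =ᵐ[μ] ⇑u := hcoeu.symm
    have hnorm1 : ⟪cLp μ (0 : Fin n → ℤ), cLp μ (0 : Fin n → ℤ)⟫ = (1:ℂ) := by
      have h' := inner_cLp μ 0 0
      simpa [fc_zero] using h'
    have h00 : ∀ p : Fin n → ℤ, ⟪cLp μ p, cLp μ (0 : Fin n → ℤ)⟫ = fc μ (-p) := by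
      intro p
      have h' := inner_cLp μ (-p) 0
      simpa using h'
    -- inner products of u with characters are proportional to Fourier coefficients
    have hinner_u : ∀ k, ⟪u, cLp μ k⟫ = fc μ k * ⟪u, cLp μ (0 : Fin n → ℤ)⟫ := by
      intro k
      obtain ⟨g, hTg, hinner, htend⟩ := mean_ergodic_folner (koopman_norm μ hmp) hF (cLp μ k)
      have hg : g = fc μ k • cLp μ 0 := by
        have hdiff : ∀ p, ⟪cLp μ p, g - fc μ k • cLp μ 0⟫ = 0 := by
          intro p
          have hlim1 : Tendsto (fun m => ⟪cLp μ p, ((F m).card:ℂ)⁻¹ • ∑ j ∈ F m,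
              ((koopman μ hmp)^j) (cLp μ k)⟫) atTop (𝓝 ⟪cLp μ p, g⟫) :=
            tendsto_const_nhds.inner htend
          have hlim2 : Tendsto (fun m => ⟪cLp μ p, ((F m).card:ℂ)⁻¹ • ∑ j ∈ F m,
              ((koopman μ hmp)^j) (cLp μ k)⟫) atTop (𝓝 (fc μ k * fc μ (-p))) := by
            have hh := h k (-p)
            refine (hh.congr fun m => ?_)
            have heq := avg_inner_eq μ hmp k (-p) F m
            rw [neg_neg] at heq
            exact heq
          have hpg : ⟪cLp μ p, g⟫ = fc μ k * fc μ (-p) := tendsto_nhds_unique hlim1 hlim2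
          rw [inner_sub_right, hpg, inner_smul_right, h00 p]
          ring
        exact sub_eq_zero.1 (eq_zero_of_inner_cLp_zero μ hdiff)
      have h1 := hinner u hufix
      rw [hg, inner_smul_right] at h1
      exact h1
    -- hence u is proportional to the constant character
    have hu_const : u = (⟪cLp μ (0 : Fin n → ℤ), u⟫ : ℂ) • cLp μ 0 := by
      have hdiff : ∀ p, ⟪cLp μ p, u - ⟪cLp μ (0 : Fin n → ℤ), u⟫ • cLp μ 0⟫ = 0 := by
        intro p
        have h1 : ⟪cLp μ p, u⟫ = fc μ (-p) * ⟪cLp μ (0 : Fin n → ℤ), u⟫ := by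
          rw [← inner_conj_symm, hinner_u p, _root_.map_mul, fc_conj, inner_conj_symm]
        rw [inner_sub_right, h1, inner_smul_right, h00 p]
        ring
      exact sub_eq_zero.1 (eq_zero_of_inner_cLp_zero μ hdiff)
    -- compute the two inner products
    have hval : ⟪cLp μ (0 : Fin n → ℤ), u⟫ = ((μ s).toReal : ℂ) := by
      rw [MeasureTheory.L2.inner_def]
      have : ∫ x, ⟪(cLp μ (0 : Fin n → ℤ) : Lp ℂ 2 μ) x, u x⟫ ∂μ
          = ∫ x, Set.indicator s (fun _ => (1:ℂ)) x ∂μ := by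
        refine integral_congr_ae ?_
        filter_upwards [coeFn_cLp μ (0 : Fin n → ℤ), hcoeu] with x h1 h2
        rw [h1, h2, RCLike.inner_apply, tchar_zero, _root_.map_one, mul_one]
      rw [this, integral_indicator_const (1:ℂ) hs]
      simp
      rfl
    have huu : ⟪u, u⟫ = ((μ s).toReal : ℂ) := by
      rw [MeasureTheory.L2.inner_def]
      have : ∫ x, ⟪(u : Lp ℂ 2 μ) x, u x⟫ ∂μ
          = ∫ x, Set.indicator s (fun _ => (1:ℂ)) x ∂μ := by
        refine integral_congr_ae ?_
        filter_upwards [hcoeu] with x h2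
        rw [h2]
        by_cases hx : x ∈ s <;> simp [Set.indicator_apply, hx, RCLike.inner_apply]
      rw [this, integral_indicator_const (1:ℂ) hs]
      simp
      rfl
    -- conclude μ s ∈ {0, 1}
    have hr : ((μ s).toReal : ℂ) = ((μ s).toReal : ℂ) * ((μ s).toReal : ℂ) := by
      have h1 : ⟪u, u⟫ = (starRingEnd ℂ) (⟪cLp μ (0 : Fin n → ℤ), u⟫)
          * (⟪cLp μ (0 : Fin n → ℤ), u⟫ * ⟪cLp μ (0 : Fin n → ℤ), cLp μ (0 : Fin n → ℤ)⟫) := by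
        conv_lhs => rw [hu_const]
        rw [inner_smul_left, inner_smul_right]
      rw [huu, hval, hnorm1, mul_one, Complex.conj_ofReal] at h1
      exact h1
    have hrr : (μ s).toReal = (μ s).toReal * (μ s).toReal := by exact_mod_cast hr
    have hzo : (μ s).toReal = 0 ∨ (μ s).toReal = 1 := by
      have hfact : (μ s).toReal * ((μ s).toReal - 1) = 0 := by nlinarith [hrr]
      rcases mul_eq_zero.1 hfact with h0 | h1
      · exact Or.inl h0
      · exact Or.inr (by linarith)
    -- translate to EventuallyConst
    rw [Filter.eventuallyConst_set']
    rcases hzo with h0 | h1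
    · left
      have : μ s = 0 := by
        have := ENNReal.toReal_eq_zero_iff (μ s)
        rcases this.1 h0 with h | h
        · exact h
        · exact absurd h (measure_ne_top μ s)
      exact ae_eq_empty.2 this
    · right
      have hμs : μ s = 1 := (ENNReal.toReal_eq_one_iff _).1 h1
      have : μ sᶜ = 0 := (prob_compl_eq_zero_iff hs).2 hμs
      exact ae_eq_univ.2 this
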